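/- The second Hessian H₂(F) of the Fermat cubic F = x^3+y^3+z^3 is, up to a nonzero scalar, equal to (x^3-y^3)(y^3-z^3)(z^3-x^3). -/

import Mathlib

open MvPolynomial

noncomputable section

/-- The Fermat cubic `x³ + y³ + z³`. -/
def Fer : MvPolynomial (Fin 3) ℂ := X 0 ^ 3 + X 1 ^ 3 + X 2 ^ 3

/-- Second partial derivative `∂²Fer/∂xᵢ∂xⱼ`. -/
def D (i j : Fin 3) : MvPolynomial (Fin 3) ℂ := pderiv i (pderiv j Fer)

/-- The Hessian determinant `H = H(Fer)`. -/
def Hdet : MvPolynomial (Fin 3) ℂ :=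
  (Matrix.of fun i j : Fin 3 => pderiv i (pderiv j Fer)).det

/-- The 3×3 "Jacobian" determinant with rows the gradients of `f`, `g` and the row `r`. -/
def JacRow (f g : MvPolynomial (Fin 3) ℂ) (r : Fin 3 → MvPolynomial (Fin 3) ℂ) :
    MvPolynomial (Fin 3) ℂ :=
  (Matrix.of fun i j : Fin 3 => ![pderiv j f, pderiv j g, r j] i).det

/-- The six entries of the adjugate of the Hessian matrix of `Fer`
(in the order used by Cayley). -/
def AdjVec : Fin 6 → MvPolynomial (Fin 3) ℂ :=
  ![D 1 1 * D 2 2 - D 1 2 ^ 2,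
    D 0 0 * D 2 2 - D 0 2 ^ 2,
    D 0 0 * D 1 1 - D 0 1 ^ 2,
    D 0 1 * D 0 2 - D 0 0 * D 1 2,
    D 0 1 * D 1 2 - D 1 1 * D 0 2,
    D 0 2 * D 1 2 - D 2 2 * D 0 1]

/-- The six entries `(H_xx, H_yy, H_zz, 2H_yz, 2H_xz, 2H_xy)` of the Hessian of `H`. -/
def HVec : Fin 6 → MvPolynomial (Fin 3) ℂ :=
  ![pderiv 0 (pderiv 0 Hdet), pderiv 1 (pderiv 1 Hdet), pderiv 2 (pderiv 2 Hdet),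
    2 * pderiv 1 (pderiv 2 Hdet), 2 * pderiv 0 (pderiv 2 Hdet), 2 * pderiv 0 (pderiv 1 Hdet)]

/-- Cayley's bordered determinant `Ψ`. -/
def Psi : MvPolynomial (Fin 3) ℂ :=
  - Matrix.det !![0, pderiv 0 Hdet, pderiv 1 Hdet, pderiv 2 Hdet;
      pderiv 0 Hdet, D 0 0, D 0 1, D 0 2;
      pderiv 1 Hdet, D 0 1, D 1 1, D 1 2;
      pderiv 2 Hdet, D 0 2, D 1 2, D 2 2]

/-- Cayley's second Hessian `H₂(Fer)` (with the corrected coefficient 20 of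
Maugesten–Moe), for `d = deg Fer = 3`. -/
def SecondHessian : MvPolynomial (Fin 3) ℂ :=
  ((12 * 3 ^ 2 - 54 * 3 + 57 : ℤ) : MvPolynomial (Fin 3) ℂ) * Hdet *
      JacRow Fer Hdet (fun u => ∑ j, AdjVec j * pderiv u (HVec j))
    + (((3 - 2) * (12 * 3 - 27) : ℤ) : MvPolynomial (Fin 3) ℂ) * Hdet *
      JacRow Fer Hdet (fun u => ∑ j, pderiv u (AdjVec j) * HVec j)
    - ((20 * (3 - 2) ^ 2 : ℤ) : MvPolynomial (Fin 3) ℂ) *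
      JacRow Fer Hdet (fun u => pderiv u Psi)


@[simp] lemma pderiv_ofNat' (i : Fin 3) (n : ℕ) [n.AtLeastTwo] :
    pderiv i (no_index (OfNat.ofNat n) : MvPolynomial (Fin 3) ℂ) = 0 := by
  rw [← map_ofNat (C : ℂ →+* MvPolynomial (Fin 3) ℂ) n, pderiv_C]

@[simp] lemma pderiv_natCast' (i : Fin 3) (n : ℕ) :
    pderiv i ((n : MvPolynomial (Fin 3) ℂ)) = 0 := by
  rw [← map_natCast (C : ℂ →+* MvPolynomial (Fin 3) ℂ) n, pderiv_C]

@[simp] lemma pderiv_one' (i : Fin 3) :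
    pderiv i ((1 : MvPolynomial (Fin 3) ℂ)) = 0 := by
  rw [← map_one (C : ℂ →+* MvPolynomial (Fin 3) ℂ), pderiv_C]

@[simp] lemma vec6_two (a b c d e f : MvPolynomial (Fin 3) ℂ) : ![a,b,c,d,e,f] 2 = c := rfl
@[simp] lemma vec6_three (a b c d e f : MvPolynomial (Fin 3) ℂ) : ![a,b,c,d,e,f] 3 = d := rfl
@[simp] lemma vec6_four (a b c d e f : MvPolynomial (Fin 3) ℂ) : ![a,b,c,d,e,f] 4 = e := rfl
@[simp] lemma vec6_five (a b c d e f : MvPolynomial (Fin 3) ℂ) : ![a,b,c,d,e,f] 5 = f := rfl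

lemma Hdet_eq : Hdet = 216 * (X 0 * X 1 * X 2) := by
  unfold Hdet
  rw [Matrix.det_fin_three]
  simp [Fer]
  ring

lemma Psi_eq : Psi = 1679616 * (X 1 ^ 3 * X 2 ^ 3 + X 0 ^ 3 * X 2 ^ 3 + X 0 ^ 3 * X 1 ^ 3) := by
  unfold Psi D
  rw [Hdet_eq]
  simp [Matrix.det_succ_row_zero, Fin.sum_univ_succ, Fer,
    show (Fin.succAbove 1 2 : Fin 4) = 3 by decide,
    show (Fin.succAbove 2 2 : Fin 4) = 3 by decide,
    show (Fin.succAbove 3 2 : Fin 4) = 2 by decide,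
    show (Fin.castSucc 2 : Fin 4) = 2 by decide]
  ring

lemma J1_eq : JacRow Fer Hdet (fun u => ∑ j, AdjVec j * pderiv u (HVec j)) = 0 := by
  unfold JacRow AdjVec HVec D
  rw [Hdet_eq, Matrix.det_fin_three]
  simp [Fin.sum_univ_six, Fer]

lemma J2_eq : JacRow Fer Hdet (fun u => ∑ j, pderiv u (AdjVec j) * HVec j) = 0 := by
  unfold JacRow AdjVec HVec D
  rw [Hdet_eq, Matrix.det_fin_three]
  simp [Fin.sum_univ_six, Fer]

lemma J3_eq : JacRow Fer Hdet (fun u => pderiv u Psi) =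
    (3265173504 : MvPolynomial (Fin 3) ℂ) * (X 1 ^ 3 * X 2 ^ 6 - X 1 ^ 6 * X 2 ^ 3 - X 0 ^ 3 * X 2 ^ 6
      + X 0 ^ 3 * X 1 ^ 6 + X 0 ^ 6 * X 2 ^ 3 - X 0 ^ 6 * X 1 ^ 3) := by
  unfold JacRow
  rw [Hdet_eq, Psi_eq, Matrix.det_fin_three]
  simp [Fer]
  ring

/-- The second Hessian of the Fermat cubic is, up to a nonzero scalar,
`(x³-y³)(y³-z³)(z³-x³)`. -/
theorem second_hessian_fermat :
    ∃ c : ℂ, c ≠ 0 ∧ SecondHessian =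
      C c * (((X 0) ^ 3 - (X 1) ^ 3) * ((X 1) ^ 3 - (X 2) ^ 3) * ((X 2) ^ 3 - (X 0) ^ 3)) := by
  refine ⟨-65303470080, by norm_num, ?_⟩
  unfold SecondHessian
  rw [J1_eq, J2_eq, J3_eq]
  rw [show ((-65303470080 : ℂ) = -((65303470080 : ℕ) : ℂ)) by norm_num, map_neg, C_eq_coe_nat]
  push_cast
  ring
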